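/- Let f : ℝ≥0 → ℝ≥0 be given by f(u) = c·g(u)/(K + g(u)) where g(u) = (−c + u − γK + sqrt((−c + u − γK)² + 4uγK))/(2γ) with c, γ, K > 0. Then f(u) < u for all u > 0. -/

import Mathlib

theorem stmt17 (c γ K : ℝ) (hc : 0 < c) (hγ : 0 < γ) (hK : 0 < K)
    (g f : ℝ → ℝ)
    (hg : g = fun u => (-c + u - γ * K +
      Real.sqrt ((-c + u - γ * K)^2 + 4 * u * γ * K)) / (2 * γ))
    (hf : f = fun u => c * g u / (K + g u)) :
    ∀ u : ℝ, 0 < u → f u < u := by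
  intro u hu
  subst hf hg
  simp only
  set b := -c + u - γ * K with hb
  set s := Real.sqrt (b ^ 2 + 4 * u * γ * K) with hsdef
  have hs2 : s ^ 2 = b ^ 2 + 4 * u * γ * K := Real.sq_sqrt (by nlinarith [sq_nonneg b, mul_pos (mul_pos hu hγ) hK])
  have hsnn : 0 ≤ s := Real.sqrt_nonneg _
  have hsb : -b < s := by
    by_contra h
    push_neg at h
    nlinarith [mul_pos (mul_pos hu hγ) hK, mul_le_mul h h hsnn (neg_nonneg.mpr (by linarith))]
  set g0 := (b + s) / (2 * γ) with hg0def
  have h2 : 2 * γ * g0 = b + s := by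
    rw [hg0def]; field_simp
  have hg0 : 0 < g0 := by
    apply div_pos (by linarith) (by linarith)
  have hquad : γ * g0 ^ 2 = b * g0 + u * K := by nlinarith [h2, hs2]
  have hKg : 0 < K + g0 := by linarith
  rw [div_lt_iff₀ hKg]
  nlinarith [mul_pos hg0 hKg, hquad]
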